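/- Let 𝔧 be a strongly stable ideal in R, m a positive integer, and 𝔊 a [𝔧,m]-marked set. Then there exists a [𝔧,m]-completion of 𝔊 if and only if every polynomial g in R admits a [𝔧,m]-reduced form modulo the ideal (𝔊). -/

import Mathlib

open MvPolynomial

namespace Paper

/-- Monomials (exponent vectors) in `N` variables. -/
abbrev Mon (N : ℕ) := Fin N →₀ ℕ

variable {N : ℕ}

/-- Total degree of a monomial. -/
def mdeg (u : Mon N) : ℕ := u.sum fun _ e => e

/-- `BorelStep a b` : `b` is obtained from `a` by one increasing elementary move,
i.e. `x^a · x_j = x^b · x_i` with `i < j`. -/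
def BorelStep (a b : Mon N) : Prop :=
  ∃ i j : Fin N, i < j ∧ a + Finsupp.single j 1 = b + Finsupp.single i 1

/-- `BorelLt a b` : `a <_B b`, i.e. `b` is obtained from `a` by a nonempty
sequence of increasing elementary moves. -/
def BorelLt (a b : Mon N) : Prop := Relation.TransGen BorelStep a b

/-- A (combinatorially encoded) monomial ideal: a set of monomials closed
under multiplication by monomials. -/
def MonIdeal (J : Set (Mon N)) : Prop := ∀ u ∈ J, ∀ d : Mon N, u + d ∈ J

/-- A strongly stable monomial ideal. -/
def StronglyStable (J : Set (Mon N)) : Prop :=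
  MonIdeal J ∧ ∀ b ∈ J, ∀ a, BorelLt b a → a ∈ J

/-- The minimal monomial basis `B_J` of a monomial ideal. -/
def MinBasis (J : Set (Mon N)) : Set (Mon N) :=
  {u | u ∈ J ∧ ∀ v ∈ J, v ≤ u → v = u}

/-- `min(x^a) ≥ max(x^h)`. -/
def StarCond (a h : Mon N) : Prop :=
  ∀ i j : Fin N, a i ≠ 0 → h j ≠ 0 → j ≤ i


variable (K : Type) [Field K]

/-- The monomial `x^u` as a polynomial. -/
noncomputable def mono {N : ℕ} (u : Mon N) : MvPolynomial (Fin N) K :=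
  MvPolynomial.monomial u (1 : K)

/-- The (actual) monomial ideal of `S` spanned by a set of monomials. -/
noncomputable def idealOf {N : ℕ} (J : Set (Mon N)) : Ideal (MvPolynomial (Fin N) K) :=
  Ideal.span (mono K '' J)

/-- The irrelevant maximal ideal `(x_0, …, x_n)`. -/
noncomputable def irrel (N : ℕ) : Ideal (MvPolynomial (Fin N) K) :=
  Ideal.span (Set.range MvPolynomial.X)

/-- The saturation `I^sat = ⋃_j (I : (x_0,…,x_n)^j)`. -/
noncomputable def satIdeal {N : ℕ} (I : Ideal (MvPolynomial (Fin N) K)) :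
    Ideal (MvPolynomial (Fin N) K) :=
  ⨆ k : ℕ, Submodule.colon I ((irrel K N ^ k : Ideal (MvPolynomial (Fin N) K)) : Set (MvPolynomial (Fin N) K))

/-- The satiety of a homogeneous ideal: the smallest `m` such that
`I_t = (I^sat)_t` for all `t ≥ m`. -/
noncomputable def satiety {N : ℕ} (I : Ideal (MvPolynomial (Fin N) K)) : ℕ :=
  sInf {m | ∀ t, m ≤ t → ∀ p : MvPolynomial (Fin N) K,
    p.IsHomogeneous t → (p ∈ I ↔ p ∈ satIdeal K I)}

/-- The saturation of a combinatorial monomial ideal. -/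
def msat {N : ℕ} (J : Set (Mon N)) : Set (Mon N) :=
  {u | ∃ k : ℕ, ∀ d : Mon N, mdeg d = k → u + d ∈ J}

/-- The satiety of a combinatorial monomial ideal. -/
noncomputable def msatiety {N : ℕ} (J : Set (Mon N)) : ℕ :=
  sInf {m | ∀ u : Mon N, m ≤ mdeg u → (u ∈ J ↔ u ∈ msat J)}

/-- A non-homogeneous `𝔧`-marked set: marked polynomials `f_α` with pairwise
distinct head terms forming `B_𝔧` and tails supported outside `𝔧`. -/
def NHMarkedSet {N : ℕ} (𝔧 : Set (Mon N)) (f : Mon N → MvPolynomial (Fin N) K) : Prop :=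
  ∀ α ∈ MinBasis 𝔧,
    MvPolynomial.coeff α (f α) = 1 ∧
    ∀ u ∈ (f α).support, u ≠ α → u ∉ 𝔧

/-- One step of the `𝔊_∗`-reduction: the monomial `x^γ = x^α ∗_𝔧 x^η` of the
support of `g` is replaced by `x^η · T(f_α)`. -/
def RStep {N : ℕ} (𝔧 : Set (Mon N)) (f : Mon N → MvPolynomial (Fin N) K)
    (g g₁ : MvPolynomial (Fin N) K) : Prop :=
  ∃ γ α η : Mon N, γ ∈ g.support ∧ γ ∈ 𝔧 ∧ α ∈ MinBasis 𝔧 ∧ γ = α + η ∧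
    StarCond α η ∧
    g₁ = g - MvPolynomial.coeff γ g • (mono K η * f α)

/-- The `𝔊_∗`-reduction relation (reflexive-transitive closure of `RStep`). -/
def Reduces {N : ℕ} (𝔧 : Set (Mon N)) (f : Mon N → MvPolynomial (Fin N) K) :
    MvPolynomial (Fin N) K → MvPolynomial (Fin N) K → Prop :=
  Relation.ReflTransGen (RStep K 𝔧 f)

/-- `g` is reduced: `supp(g) ∩ 𝔧 = ∅`. -/
def IsReducedPoly {N : ℕ} (𝔧 : Set (Mon N)) (g : MvPolynomial (Fin N) K) : Prop :=
  ∀ u ∈ g.support, u ∉ 𝔧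

/-- A `[𝔧,m]`-marked set: a n.h. `𝔧`-marked set whose tails are supported in
`N(𝔧)_{≤ max{m,|α|}}`. -/
def JmMarkedSet {N : ℕ} (𝔧 : Set (Mon N)) (m : ℕ)
    (f : Mon N → MvPolynomial (Fin N) K) : Prop :=
  ∀ α ∈ MinBasis 𝔧,
    MvPolynomial.coeff α (f α) = 1 ∧
    ∀ u ∈ (f α).support, u ≠ α → (u ∉ 𝔧 ∧ mdeg u ≤ max m (mdeg α))

/-- The ideal `(𝔊)` generated by a marked set. -/
noncomputable def idealG {N : ℕ} (𝔧 : Set (Mon N))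
    (f : Mon N → MvPolynomial (Fin N) K) : Ideal (MvPolynomial (Fin N) K) :=
  Ideal.span (f '' MinBasis 𝔧)

/-- A `[𝔧,m]`-completion of `𝔊`: marked polynomials `f_β ∈ (𝔊)` with pairwise
distinct head terms the monomials of `𝔧_{≤m} \ B_𝔧` and tails in `N(𝔧)_{≤m}`. -/
def IsCompletion {N : ℕ} (𝔧 : Set (Mon N)) (m : ℕ)
    (f h : Mon N → MvPolynomial (Fin N) K) : Prop :=
  ∀ β : Mon N, β ∈ 𝔧 → mdeg β ≤ m → β ∉ MinBasis 𝔧 →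
    h β ∈ idealG K 𝔧 f ∧
    MvPolynomial.coeff β (h β) = 1 ∧
    ∀ u ∈ (h β).support, u ≠ β → (u ∉ 𝔧 ∧ mdeg u ≤ m)

/-- `g'` is a `[𝔧,m]`-reduced form of `g` modulo `(𝔊)`. -/
def IsReducedForm {N : ℕ} (𝔧 : Set (Mon N)) (m : ℕ)
    (f : Mon N → MvPolynomial (Fin N) K)
    (g g' : MvPolynomial (Fin N) K) : Prop :=
  (∀ u ∈ g'.support, u ∉ 𝔧 ∧ mdeg u ≤ max m g.totalDegree) ∧
  g - g' ∈ idealG K 𝔧 f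

/-- `R_{≤ t}`: the `K`-subspace of polynomials of degree at most `t`. -/
noncomputable def degLE (N : ℕ) (t : ℕ) : Submodule K (MvPolynomial (Fin N) K) where
  carrier := {g | ∀ u ∈ g.support, mdeg u ≤ t}
  zero_mem' := by simp
  add_mem' := by
    intro a b ha hb u hu
    rcases Finset.mem_union.mp (MvPolynomial.support_add hu) with h | h
    · exact ha u h
    · exact hb u h
  smul_mem' := by
    intro c a ha u hu
    exact ha u (MvPolynomial.support_smul hu)

/-- `⟨N(𝔧)_{≤t}⟩`: the `K`-span of the monomials outside `𝔧` of degree `≤ t`. -/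
noncomputable def spanNLE {N : ℕ} (𝔧 : Set (Mon N)) (t : ℕ) :
    Submodule K (MvPolynomial (Fin N) K) :=
  Submodule.span K (mono K '' {u : Mon N | u ∉ 𝔧 ∧ mdeg u ≤ t})

/-- `(𝔊)_{≤t}`: the `K`-subspace of elements of `(𝔊)` of degree `≤ t`. -/
noncomputable def GleSub {N : ℕ} (𝔧 : Set (Mon N))
    (f : Mon N → MvPolynomial (Fin N) K) (t : ℕ) :
    Submodule K (MvPolynomial (Fin N) K) :=
  (idealG K 𝔧 f).restrictScalars K ⊓ degLE K N t

/-- A `[𝔧,m]`-marked basis: a `[𝔧,m]`-marked set with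
`R_{≤t} = ⟨N(𝔧)_{≤t}⟩ ⊕ (𝔊)_{≤t}` for all `t ≥ m`. -/
def JmMarkedBasis {N : ℕ} (𝔧 : Set (Mon N)) (m : ℕ)
    (f : Mon N → MvPolynomial (Fin N) K) : Prop :=
  JmMarkedSet K 𝔧 m f ∧
  ∀ t, m ≤ t →
    Disjoint (spanNLE K 𝔧 t) (GleSub K 𝔧 f t) ∧
    spanNLE K 𝔧 t ⊔ GleSub K 𝔧 f t = degLE K N t

/-! ### Auxiliary material for the proof -/

section Auxiliary

variable {n : ℕ}

lemma mdeg_add (a b : Mon n) : mdeg (a + b) = mdeg a + mdeg b := by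
  unfold mdeg
  rw [Finsupp.sum_add_index] <;> simp

lemma mdeg_single (i : Fin n) : mdeg (Finsupp.single i 1) = 1 := by
  unfold mdeg
  simp [Finsupp.sum_single_index]

/-- The set of "removable" variables of a monomial (w.r.t. `𝔧`). -/
noncomputable def Rem (𝔧 : Set (Mon n)) (u : Mon n) : Finset (Fin n) :=
  letI := Classical.dec
  Finset.univ.filter (fun i => u i ≠ 0 ∧ u - Finsupp.single i 1 ∈ 𝔧)

lemma mem_Rem {𝔧 : Set (Mon n)} {u : Mon n} {i : Fin n} :
    i ∈ Rem 𝔧 u ↔ u i ≠ 0 ∧ u - Finsupp.single i 1 ∈ 𝔧 := by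
  classical
  simp [Rem]

/-- The secondary component of the termination measure. -/
noncomputable def ψm (𝔧 : Set (Mon n)) (u : Mon n) : ℕ :=
  (Rem 𝔧 u).sup (fun i => (i : ℕ) + 1)

/-- The termination measure. -/
noncomputable def μm (𝔧 : Set (Mon n)) (u : Mon n) : ℕ :=
  (n + 1) * mdeg u + ψm 𝔧 u

lemma ψm_le (𝔧 : Set (Mon n)) (u : Mon n) : ψm 𝔧 u ≤ n := by
  refine Finset.sup_le fun i _ => ?_
  exact i.isLt

lemma single_le_of_ne {u : Mon n} {i : Fin n} (h : u i ≠ 0) :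
    Finsupp.single i 1 ≤ u :=
  Finsupp.single_le_iff.mpr (Nat.one_le_iff_ne_zero.mpr h)

lemma Rem_nonempty {𝔧 : Set (Mon n)} (hmi : MonIdeal 𝔧) {u : Mon n}
    (hu : u ∈ 𝔧) (hnm : u ∉ MinBasis 𝔧) : (Rem 𝔧 u).Nonempty := by
  have : ∃ v ∈ 𝔧, v ≤ u ∧ v ≠ u := by
    by_contra hcon
    push_neg at hcon
    exact hnm ⟨hu, fun v hv hle => hcon v hv hle⟩
  obtain ⟨v, hv𝔧, hvle, hvne⟩ := this
  have : ∃ i, v i < u i := by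
    by_contra hcon
    push_neg at hcon
    exact hvne (le_antisymm hvle (Finsupp.le_def.mpr hcon))
  obtain ⟨i, hi⟩ := this
  refine ⟨i, mem_Rem.mpr ⟨?_, ?_⟩⟩
  · omega
  · have hle : v ≤ u - Finsupp.single i 1 := by
      refine Finsupp.le_def.mpr fun j => ?_
      rw [Finsupp.tsub_apply, Finsupp.single_apply]
      split_ifs with hij
      · subst hij; omega
      · have := Finsupp.le_def.mp hvle j; omega
    have := hmi v hv𝔧 (u - Finsupp.single i 1 - v)
    rwa [add_tsub_cancel_of_le hle] at this

lemma Rem_downward {𝔧 : Set (Mon n)} (hss : StronglyStable 𝔧) {u : Mon n}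
    {i j : Fin n} (hj : j ∈ Rem 𝔧 u) (hij : i < j) (hi : u i ≠ 0) :
    i ∈ Rem 𝔧 u := by
  obtain ⟨hju, hjmem⟩ := mem_Rem.mp hj
  refine mem_Rem.mpr ⟨hi, ?_⟩
  have hstep : BorelStep (u - Finsupp.single j 1) (u - Finsupp.single i 1) := by
    refine ⟨i, j, hij, ?_⟩
    rw [tsub_add_cancel_of_le (single_le_of_ne hju),
      tsub_add_cancel_of_le (single_le_of_ne hi)]
  exact hss.2 _ hjmem _ (Relation.TransGen.single hstep)

lemma mono_mem_idealG {K : Type} [Field K] {𝔧 : Set (Mon n)}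
    {f : Mon n → MvPolynomial (Fin n) K} {α : Mon n} (h : α ∈ MinBasis 𝔧) :
    f α ∈ idealG K 𝔧 f :=
  Ideal.subset_span ⟨α, h, rfl⟩

/-- Key lemma: from a completion, every monomial of `𝔧` has a "normal form"
in `(𝔊)` with head coefficient `1` and tail outside `𝔧` of bounded degree. -/
lemma exists_normal_form {K : Type} [Field K] (𝔧 : Set (Mon n)) (m : ℕ)
    (f h : Mon n → MvPolynomial (Fin n) K)
    (hss : StronglyStable 𝔧) (hms : JmMarkedSet K 𝔧 m f)
    (hcomp : IsCompletion K 𝔧 m f h) :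
    ∀ u ∈ 𝔧, ∃ p : MvPolynomial (Fin n) K, p ∈ idealG K 𝔧 f ∧
      MvPolynomial.coeff u p = 1 ∧
      ∀ v ∈ p.support, v ≠ u → v ∉ 𝔧 ∧ mdeg v ≤ max m (mdeg u) := by
  classical
  suffices H : ∀ k : ℕ, ∀ u ∈ 𝔧, μm 𝔧 u ≤ k → ∃ p : MvPolynomial (Fin n) K,
      p ∈ idealG K 𝔧 f ∧ MvPolynomial.coeff u p = 1 ∧
      ∀ v ∈ p.support, v ≠ u → v ∉ 𝔧 ∧ mdeg v ≤ max m (mdeg u) by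
    intro u hu
    exact H (μm 𝔧 u) u hu le_rfl
  intro k
  induction k using Nat.strong_induction_on with
  | _ k IH =>
  intro u hu hk
  by_cases hmin : u ∈ MinBasis 𝔧
  · exact ⟨f u, mono_mem_idealG hmin, (hms u hmin).1, fun v hv hne => (hms u hmin).2 v hv hne⟩
  by_cases hdeg : mdeg u ≤ m
  · obtain ⟨h1, h2, h3⟩ := hcomp u hu hdeg hmin
    refine ⟨h u, h1, h2, fun v hv hne => ?_⟩
    obtain ⟨a, b⟩ := h3 v hv hne
    exact ⟨a, le_trans b (le_max_left _ _)⟩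
  push_neg at hdeg
  -- main case : mdeg u > m, u not minimal
  obtain ⟨i, hiRem⟩ := Rem_nonempty hss.1 hu hmin
  obtain ⟨hiu, hw𝔧⟩ := mem_Rem.mp hiRem
  set w : Mon n := u - Finsupp.single i 1 with hw
  have hwu : Finsupp.single i 1 + w = u := add_tsub_cancel_of_le (single_le_of_ne hiu)
  have hmu : mdeg u = mdeg w + 1 := by
    rw [← hwu, mdeg_add, mdeg_single]; omega
  have hμw : μm 𝔧 w < μm 𝔧 u := by
    have h1 := ψm_le 𝔧 w
    have h2 : (n+1) * mdeg u = (n+1) * mdeg w + (n+1) := by rw [hmu]; ring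
    unfold μm
    omega
  obtain ⟨q, hqI, hq1, hqsup⟩ := IH (μm 𝔧 w) (lt_of_lt_of_le hμw hk) w hw𝔧 le_rfl
  have hqdeg : ∀ s ∈ q.support, mdeg s ≤ mdeg w := by
    intro s hs
    rcases eq_or_ne s w with rfl | hne
    · exact le_rfl
    · have := (hqsup s hs hne).2
      omega
  set p : MvPolynomial (Fin n) K := mono K (Finsupp.single i 1) * q with hp
  have hpI : p ∈ idealG K 𝔧 f := Ideal.mul_mem_left _ _ hqI
  have hpcoeff : ∀ v : Mon n, MvPolynomial.coeff (Finsupp.single i 1 + v) p =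
      MvPolynomial.coeff v q := by
    intro v
    rw [hp, mono, MvPolynomial.coeff_monomial_mul, one_mul]
  have hpu : MvPolynomial.coeff u p = 1 := by
    rw [← hwu, hpcoeff, hq1]
  have hpsupp : ∀ v ∈ p.support, ∃ s ∈ q.support, v = Finsupp.single i 1 + s := by
    intro v hv
    have := MvPolynomial.support_mul _ _ hv
    rw [mono, MvPolynomial.support_monomial, if_neg (one_ne_zero (α := K))] at this
    obtain ⟨b, hb, c, hc, hbc⟩ := Finset.mem_add.mp this
    rw [Finset.mem_singleton] at hb
    exact ⟨c, hc, by rw [← hbc, hb]⟩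
  have hpdeg : ∀ v ∈ p.support, mdeg v ≤ mdeg u := by
    intro v hv
    obtain ⟨s, hs, rfl⟩ := hpsupp v hv
    rw [mdeg_add, mdeg_single, hmu]
    have := hqdeg s hs
    omega
  -- the "bad" monomials of the support of p
  set B : Finset (Mon n) := p.support.filter (fun v => v ∈ 𝔧 ∧ v ≠ u) with hB
  have hτs : ∀ τ ∈ B, ∃ s ∈ q.support, s ∉ 𝔧 ∧ τ = Finsupp.single i 1 + s := by
    intro τ hτ
    obtain ⟨hτp, hτ𝔧, hτne⟩ := Finset.mem_filter.mp hτ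
    obtain ⟨s, hs, rfl⟩ := hpsupp τ hτp
    refine ⟨s, hs, fun hs𝔧 => ?_, rfl⟩
    rcases eq_or_ne s w with rfl | hne
    · exact hτne hwu
    · exact (hqsup s hs hne).1 hs𝔧
  have hμτ : ∀ τ ∈ B, μm 𝔧 τ < μm 𝔧 u := by
    intro τ hτ
    obtain ⟨hτp, hτ𝔧, hτne⟩ := Finset.mem_filter.mp hτ
    obtain ⟨s, hs, hs𝔧, hτeq⟩ := hτs τ hτ
    rcases lt_or_eq_of_le (hpdeg τ hτp) with hlt | heq
    · have h1 := ψm_le 𝔧 τ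
      have h2 := ψm_le 𝔧 u
      have h3 : (n+1) * mdeg τ + (n+1) ≤ (n+1) * mdeg u := by
        have : mdeg τ + 1 ≤ mdeg u := hlt
        calc (n+1) * mdeg τ + (n+1) = (n+1) * (mdeg τ + 1) := by ring
        _ ≤ (n+1) * mdeg u := Nat.mul_le_mul_left _ this
      unfold μm
      omega
    · -- same degree : secondary measure decreases
      have hψ : ψm 𝔧 τ < ψm 𝔧 u := by
        have hub : (i : ℕ) + 1 ≤ ψm 𝔧 u := by
          unfold ψm
          exact Finset.le_sup (f := fun j : Fin n => (j : ℕ) + 1) hiRem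
        have hτsup : ψm 𝔧 τ ≤ (i : ℕ) := by
          refine Finset.sup_le fun j hj => ?_
          -- show j < i
          have hji : j < i := by
            obtain ⟨hjτ, hjm⟩ := mem_Rem.mp hj
            rcases lt_trichotomy j i with h | rfl | h
            · exact h
            · exfalso
              rw [hτeq, add_tsub_cancel_left] at hjm
              exact hs𝔧 hjm
            · exfalso
              have hiτ : τ i ≠ 0 := by
                rw [hτeq]
                simp [Finsupp.add_apply, Finsupp.single_apply]
              have := mem_Rem.mp (Rem_downward hss hj h hiτ)
              rw [hτeq, add_tsub_cancel_left] at this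
              exact hs𝔧 this.2
          omega
        omega
      unfold μm
      rw [heq]
      omega
  -- normal forms for the bad monomials
  have hGex : ∀ τ : Mon n, ∃ r : MvPolynomial (Fin n) K, τ ∈ B →
      r ∈ idealG K 𝔧 f ∧ MvPolynomial.coeff τ r = 1 ∧
      ∀ v ∈ r.support, v ≠ τ → v ∉ 𝔧 ∧ mdeg v ≤ max m (mdeg τ) := by
    intro τ
    by_cases hτ : τ ∈ B
    · obtain ⟨r, hr⟩ := IH (μm 𝔧 τ) (lt_of_lt_of_le (hμτ τ hτ) hk) τ
        (Finset.mem_filter.mp hτ).2.1 le_rfl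
      exact ⟨r, fun _ => hr⟩
    · exact ⟨0, fun hc => absurd hc hτ⟩
  choose G hG using hGex
  have hGcoeff : ∀ τ ∈ B, ∀ v : Mon n, v ∈ 𝔧 →
      MvPolynomial.coeff v (G τ) = if τ = v then 1 else 0 := by
    intro τ hτ v hv𝔧
    obtain ⟨_, hG1, hGs⟩ := hG τ hτ
    rcases eq_or_ne τ v with rfl | hne
    · rw [if_pos rfl, hG1]
    · rw [if_neg hne]
      by_contra hc
      have hvs : v ∈ (G τ).support := MvPolynomial.mem_support_iff.mpr hc
      exact (hGs v hvs (Ne.symm hne)).1 hv𝔧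
  refine ⟨p - ∑ τ ∈ B, MvPolynomial.coeff τ p • G τ, ?_, ?_, ?_⟩
  · refine Submodule.sub_mem _ hpI (Submodule.sum_mem _ fun τ hτ => ?_)
    rw [MvPolynomial.smul_eq_C_mul]
    exact Ideal.mul_mem_left _ _ (hG τ hτ).1
  · rw [MvPolynomial.coeff_sub, MvPolynomial.coeff_sum, hpu]
    have : ∀ τ ∈ B, MvPolynomial.coeff u (MvPolynomial.coeff τ p • G τ) = 0 := by
      intro τ hτ
      rw [MvPolynomial.coeff_smul, smul_eq_mul, hGcoeff τ hτ u hu,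
        if_neg (Finset.mem_filter.mp hτ).2.2, mul_zero]
    rw [Finset.sum_congr rfl this, Finset.sum_const_zero, sub_zero]
  · intro v hv hne
    have hcv : MvPolynomial.coeff v (p - ∑ τ ∈ B, MvPolynomial.coeff τ p • G τ) ≠ 0 :=
      MvPolynomial.mem_support_iff.mp hv
    constructor
    · -- v ∉ 𝔧
      intro hv𝔧
      apply hcv
      rw [MvPolynomial.coeff_sub, MvPolynomial.coeff_sum]
      have hsum : ∀ τ ∈ B, MvPolynomial.coeff v (MvPolynomial.coeff τ p • G τ) =
          if τ = v then MvPolynomial.coeff v p else 0 := by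
        intro τ hτ
        rw [MvPolynomial.coeff_smul, smul_eq_mul, hGcoeff τ hτ v hv𝔧]
        rcases eq_or_ne τ v with rfl | hne'
        · rw [if_pos rfl, if_pos rfl]; ring
        · rw [if_neg hne', if_neg hne', mul_zero]
      rw [Finset.sum_congr rfl hsum, Finset.sum_ite_eq' B v (fun _ => MvPolynomial.coeff v p)]
      by_cases hvB : v ∈ B
      · rw [if_pos hvB, sub_self]
      · rw [if_neg hvB]
        have : MvPolynomial.coeff v p = 0 := by
          by_contra hc
          exact hvB (Finset.mem_filter.mpr ⟨MvPolynomial.mem_support_iff.mpr hc, hv𝔧, hne⟩)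
        rw [this, sub_zero]
    · -- degree bound
      by_cases hvp : v ∈ p.support
      · exact le_trans (hpdeg v hvp) (le_max_right _ _)
      · have hvp0 : MvPolynomial.coeff v p = 0 := MvPolynomial.notMem_support_iff.mp hvp
        rw [MvPolynomial.coeff_sub, MvPolynomial.coeff_sum, hvp0, zero_sub, neg_ne_zero] at hcv
        obtain ⟨τ, hτ, hτne⟩ := Finset.exists_ne_zero_of_sum_ne_zero hcv
        rw [MvPolynomial.coeff_smul, smul_eq_mul] at hτne
        have hvG : v ∈ (G τ).support := by
          refine MvPolynomial.mem_support_iff.mpr fun hc => ?_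
          rw [hc, mul_zero] at hτne
          exact hτne rfl
        have hτdeg : mdeg τ ≤ mdeg u := hpdeg τ (Finset.mem_filter.mp hτ).1
        rcases eq_or_ne v τ with rfl | hvτ
        · exact le_trans hτdeg (le_max_right _ _)
        · have := ((hG τ hτ).2.2 v hvG hvτ).2
          have : mdeg v ≤ max m (mdeg τ) := this
          omega


end Auxiliary

/-- a `[𝔧,m]`-marked set `𝔊` admits a `[𝔧,m]`-completion iff
every polynomial admits a `[𝔧,m]`-reduced form modulo `(𝔊)`. -/
theorem completion_iff_reducedForms {n : ℕ} (K : Type) [Field K]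
    (𝔧 : Set (Mon n)) (m : ℕ) (f : Mon n → MvPolynomial (Fin n) K)
    (hss : StronglyStable 𝔧) (hm : 0 < m) (hms : JmMarkedSet K 𝔧 m f) :
    (∃ h : Mon n → MvPolynomial (Fin n) K, IsCompletion K 𝔧 m f h) ↔
    (∀ g : MvPolynomial (Fin n) K,
      ∃ g' : MvPolynomial (Fin n) K, IsReducedForm K 𝔧 m f g g') := by
  classical
  constructor
  · rintro ⟨h, hcomp⟩ g
    set T : Finset (Mon n) := g.support.filter (fun v => v ∈ 𝔧) with hT
    have hGex : ∀ u : Mon n, ∃ r : MvPolynomial (Fin n) K, u ∈ T →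
        r ∈ idealG K 𝔧 f ∧ MvPolynomial.coeff u r = 1 ∧
        ∀ v ∈ r.support, v ≠ u → v ∉ 𝔧 ∧ mdeg v ≤ max m (mdeg u) := by
      intro u
      by_cases hu : u ∈ T
      · obtain ⟨r, hr⟩ := exists_normal_form 𝔧 m f h hss hms hcomp u
          (Finset.mem_filter.mp hu).2
        exact ⟨r, fun _ => hr⟩
      · exact ⟨0, fun hc => absurd hc hu⟩
    choose G hG using hGex
    have hGcoeff : ∀ u ∈ T, ∀ v : Mon n, v ∈ 𝔧 →
        MvPolynomial.coeff v (G u) = if u = v then 1 else 0 := by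
      intro u hu v hv𝔧
      obtain ⟨_, hG1, hGs⟩ := hG u hu
      rcases eq_or_ne u v with rfl | hne
      · rw [if_pos rfl, hG1]
      · rw [if_neg hne]
        by_contra hc
        exact (hGs v (MvPolynomial.mem_support_iff.mpr hc) (Ne.symm hne)).1 hv𝔧
    refine ⟨g - ∑ u ∈ T, MvPolynomial.coeff u g • G u, ?_, ?_⟩
    · intro v hv
      have hcv : MvPolynomial.coeff v (g - ∑ u ∈ T, MvPolynomial.coeff u g • G u) ≠ 0 :=
        MvPolynomial.mem_support_iff.mp hv
      constructor
      · intro hv𝔧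
        apply hcv
        rw [MvPolynomial.coeff_sub, MvPolynomial.coeff_sum]
        have hsum : ∀ u ∈ T, MvPolynomial.coeff v (MvPolynomial.coeff u g • G u) =
            if u = v then MvPolynomial.coeff v g else 0 := by
          intro u hu
          rw [MvPolynomial.coeff_smul, smul_eq_mul, hGcoeff u hu v hv𝔧]
          rcases eq_or_ne u v with rfl | hne'
          · rw [if_pos rfl, if_pos rfl]; ring
          · rw [if_neg hne', if_neg hne', mul_zero]
        rw [Finset.sum_congr rfl hsum,
          Finset.sum_ite_eq' T v (fun _ => MvPolynomial.coeff v g)]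
        by_cases hvT : v ∈ T
        · rw [if_pos hvT, sub_self]
        · rw [if_neg hvT]
          have : MvPolynomial.coeff v g = 0 := by
            by_contra hc
            exact hvT (Finset.mem_filter.mpr ⟨MvPolynomial.mem_support_iff.mpr hc, hv𝔧⟩)
          rw [this, sub_zero]
      · by_cases hvg : v ∈ g.support
        · exact le_trans (MvPolynomial.le_totalDegree hvg) (le_max_right _ _)
        · have hvg0 : MvPolynomial.coeff v g = 0 := MvPolynomial.notMem_support_iff.mp hvg
          rw [MvPolynomial.coeff_sub, MvPolynomial.coeff_sum, hvg0, zero_sub,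
            neg_ne_zero] at hcv
          obtain ⟨u, hu, hune⟩ := Finset.exists_ne_zero_of_sum_ne_zero hcv
          rw [MvPolynomial.coeff_smul, smul_eq_mul] at hune
          have hvG : v ∈ (G u).support := by
            refine MvPolynomial.mem_support_iff.mpr fun hc => ?_
            rw [hc, mul_zero] at hune
            exact hune rfl
          have hug : u ∈ g.support := (Finset.mem_filter.mp hu).1
          have hudeg : mdeg u ≤ g.totalDegree := MvPolynomial.le_totalDegree hug
          rcases eq_or_ne v u with rfl | hvu
          · exact le_trans hudeg (le_max_right _ _)
          · have hb := ((hG u hu).2.2 v hvG hvu).2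
            have : max m (mdeg u) ≤ max m g.totalDegree := max_le (le_max_left _ _)
              (le_trans hudeg (le_max_right _ _))
            omega
    · have : g - (g - ∑ u ∈ T, MvPolynomial.coeff u g • G u) =
          ∑ u ∈ T, MvPolynomial.coeff u g • G u := by ring
      rw [this]
      refine Submodule.sum_mem _ fun u hu => ?_
      rw [MvPolynomial.smul_eq_C_mul]
      exact Ideal.mul_mem_left _ _ (hG u hu).1
  · intro hred
    refine ⟨fun β => mono K β - Classical.choose (hred (mono K β)), ?_⟩
    intro β hβ hβm hβnm
    obtain ⟨hsup, hmem⟩ := Classical.choose_spec (hred (mono K β))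
    set g' := Classical.choose (hred (mono K β)) with hg'
    have hdeg : (mono K β).totalDegree = mdeg β := by
      rw [mono, MvPolynomial.totalDegree_monomial _ (one_ne_zero (α := K))]
      rfl
    have hβ' : ∀ v ∈ g'.support, v ∉ 𝔧 ∧ mdeg v ≤ m := by
      intro v hv
      obtain ⟨a, b⟩ := hsup v hv
      rw [hdeg] at b
      exact ⟨a, le_trans b (max_le le_rfl hβm)⟩
    refine ⟨hmem, ?_, ?_⟩
    · rw [MvPolynomial.coeff_sub, mono, MvPolynomial.coeff_monomial, if_pos rfl]
      have : MvPolynomial.coeff β g' = 0 := by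
        by_contra hc
        exact (hβ' β (MvPolynomial.mem_support_iff.mpr hc)).1 hβ
      exact sub_eq_self.mpr this
    · intro v hv hne
      have hc : MvPolynomial.coeff v (mono K β - g') ≠ 0 :=
        MvPolynomial.mem_support_iff.mp hv
      rw [MvPolynomial.coeff_sub, mono, MvPolynomial.coeff_monomial,
        if_neg (Ne.symm hne), zero_sub, neg_ne_zero] at hc
      exact hβ' v (MvPolynomial.mem_support_iff.mpr hc)


end Paper
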